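/- The number of distinct right conjugates of a standard morphism ψ on 𝒜 = {a,b} is |ψ(ab)| − 1; namely, the right conjugates ψ₀, ψ₁, …, ψ_{|ψ(ab)|−2} all exist and are pairwise distinct, and every right conjugate of ψ equals one of them. -/

import Mathlib

/-- The two-letter alphabet 𝒜 = {a, b}. -/
inductive AB : Type
  | a : AB
  | b : AB
deriving DecidableEq, Repr

/-- Apply a morphism (determined by its images on the letters) to a finite word. -/
def applyM (g : AB → List AB) (w : List AB) : List AB := w.flatMap g

/-- The exchange morphism E : a ↦ b, b ↦ a. -/
def Em : AB → List AB
  | AB.a => [AB.b]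
  | AB.b => [AB.a]

/-- The morphism φ : a ↦ ab, b ↦ a. -/
def phim : AB → List AB
  | AB.a => [AB.a, AB.b]
  | AB.b => [AB.a]

/-- Composition of morphisms: `compM g h` applies `h` first, then `g`. -/
def compM (g h : AB → List AB) : AB → List AB := fun c => applyM g (h c)

/-- Powers of a morphism. -/
def mpow (g : AB → List AB) : ℕ → AB → List AB
  | 0 => fun c => [c]
  | n + 1 => compM g (mpow g n)

/-- A morphism is standard iff it is a composition of E and φ (in any number and order). -/
inductive IsStandard : (AB → List AB) → Prop
  | id : IsStandard (fun c => [c])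
  | compE {ψ : AB → List AB} : IsStandard ψ → IsStandard (compM ψ Em)
  | compPhi {ψ : AB → List AB} : IsStandard ψ → IsStandard (compM ψ phim)

/-- `IsRightConj ψ ξ k` : ξ is the k-th right conjugate of ψ, i.e. there is a word u
of length k with ψ(w)u = uξ(w) for all finite words w. -/
def IsRightConj (ψ ξ : AB → List AB) (k : ℕ) : Prop :=
  ∃ u : List AB, u.length = k ∧ ∀ w : List AB, applyM ψ w ++ u = u ++ applyM ξ w

/-- w^k (power of a finite word under concatenation). -/
def lpow (w : List AB) : ℕ → List AB
  | 0 => []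
  | k + 1 => w ++ lpow w k

/-- Standard sequence associated with a directive sequence (d₁, d₂, …) (here `d`
is indexed so that `d i` is dᵢ for i ≥ 1): `sseq d 0 = s₋₁ = b`, `sseq d (n+1) = sₙ`,
with s₀ = a and sₙ = sₙ₋₁^{dₙ} sₙ₋₂. -/
def sseq (d : ℕ → ℕ) : ℕ → List AB
  | 0 => [AB.b]
  | 1 => [AB.a]
  | n + 2 => lpow (sseq d (n + 1)) (d (n + 1)) ++ sseq d n

/-- Convergent denominators: `qseq d n` = qₙ = |sₙ| (q₀ = 1, q₁ = 1 + d₁,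
qₙ = dₙqₙ₋₁ + qₙ₋₂). -/
def qseq (d : ℕ → ℕ) : ℕ → ℕ
  | 0 => 1
  | 1 => 1 + d 1
  | n + 2 => d (n + 2) * qseq d (n + 1) + qseq d n

/-- `PrefInf u x` : the finite word u is a prefix of the infinite word x. -/
def PrefInf (u : List AB) (x : ℕ → AB) : Prop :=
  ∀ i, i < u.length → u.getD i AB.a = x i

/-- Image of an infinite word under a (non-erasing) morphism, letter by letter. -/
def applyInf (g : AB → List AB) (x : ℕ → AB) : ℕ → AB :=
  fun i => (applyM g ((List.range (i + 1)).map x)).getD i AB.a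

/-- `IsProdInf u x` : the infinite word x is the infinite product u 0 · u 1 · u 2 ⋯,
i.e. every finite partial product is a prefix of x. -/
def IsProdInf (u : ℕ → List AB) (x : ℕ → AB) : Prop :=
  ∀ n, PrefInf (((List.range n).map u).flatten) x

/-- Adjoining singular words: `vword d k` is the adjoining singular word v_{k-1}
(so `vword d 0 = v₋₁`), where vₙ = a·sₙ₊₁^{d_{n+2}−1}sₙ·b⁻¹ for n odd and
vₙ = b·sₙ₊₁^{d_{n+2}−1}sₙ·a⁻¹ for n even. -/
def vword (d : ℕ → ℕ) (k : ℕ) : List AB :=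
  (if k % 2 = 0 then AB.a else AB.b) ::
    (lpow (sseq d (k + 1)) (d (k + 1) - 1) ++ sseq d k).dropLast

/-- Singular words: `wword d k` is the singular word w_{k-2}
(w₋₂ = ε, w₋₁ = a, w₀ = b, and wₙ = a·sₙ·b⁻¹ for n ≥ 1 odd, wₙ = b·sₙ·a⁻¹ for n even). -/
def wword (d : ℕ → ℕ) : ℕ → List AB
  | 0 => []
  | 1 => [AB.a]
  | 2 => [AB.b]
  | k + 3 =>
      (if (k + 1) % 2 = 1 then AB.a else AB.b) :: (sseq d (k + 2)).dropLast

/-- The standard morphism σ associated with a type (i) Sturm number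
α = [0;1+d₁,\overline{d₂,…,dₙ}] : σ(a) = sₙ₋₁, σ(b) = sₙ₋₁^{dₙ−d₁} sₙ₋₂. -/
def sigmaGen (d : ℕ → ℕ) (n : ℕ) : AB → List AB
  | AB.a => sseq d n
  | AB.b => lpow (sseq d n) (d n - d 1) ++ sseq d (n - 1)

/-- The directive sequence of α = [0;2,\overline{r}] : d₁ = 1, dᵢ = r for i ≥ 2. -/
def dseq (r : ℕ) : ℕ → ℕ := fun i => if i ≤ 1 then 1 else r

/-- The directive sequence of 1 − α = [0;1,d₁,\overline{d₂,…,dₙ}] obtained from that of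
α = [0;1+d₁,\overline{d₂,…,dₙ}] : ê₁ = 0 and êᵢ = dᵢ₋₁ for i ≥ 2. -/
def dhat (d : ℕ → ℕ) : ℕ → ℕ := fun i => if i ≤ 1 then 0 else d (i - 1)

/-- `Generates ψ c x` : ψ is prolongable on the letter c and x = ψ^ω(c), i.e. every
ψ^m(c) is a prefix of x. -/
def Generates (ψ : AB → List AB) (c : AB) (x : ℕ → AB) : Prop :=
  (∃ w : List AB, w ≠ [] ∧ ψ c = c :: w) ∧ ∀ m, PrefInf (mpow ψ m c) x

/-- Fibonacci numbers, shifted: `fibw k = F_{k-1}`, so fibw 0 = F₋₁ = 1,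
fibw 1 = F₀ = 1, Fₙ = Fₙ₋₁ + Fₙ₋₂. -/
def fibw : ℕ → ℕ
  | 0 => 1
  | 1 => 1
  | n + 2 => fibw (n + 1) + fibw n

/-- `HasCF γ a` : γ has continued fraction expansion [0; a 1, a 2, a 3, …]. -/
def HasCF (γ : ℝ) (a : ℕ → ℕ) : Prop :=
  ∃ x : ℕ → ℝ, x 0 = γ ∧ (∀ i, 0 < x i ∧ x i < 1) ∧
    ∀ i, 1 / x i = (a (i + 1) : ℝ) + x (i + 1)

/-- γ has a continued fraction expansion of type (i):
γ = [0;1+d₁,\overline{d₂,…,dₙ}] < 1/2 with dₙ ≥ d₁ ≥ 1. -/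
def CFTypeI (γ : ℝ) : Prop :=
  ∃ a : ℕ → ℕ, HasCF γ a ∧ γ < 1 / 2 ∧
    ∃ n : ℕ, 2 ≤ n ∧ ∃ d : ℕ → ℕ,
      (∀ i, 1 ≤ i → 1 ≤ d i) ∧ a 1 = 1 + d 1 ∧ (∀ i, 2 ≤ i → a i = d i) ∧
      (∀ i, 2 ≤ i → d (i + (n - 1)) = d i) ∧ d 1 ≤ d n

/-- γ has a continued fraction expansion of type (ii):
γ = [0;1,d₁,\overline{d₂,…,dₙ}] > 1/2 with dₙ ≥ d₁. -/
def CFTypeII (γ : ℝ) : Prop :=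
  ∃ a : ℕ → ℕ, HasCF γ a ∧ 1 / 2 < γ ∧
    ∃ n : ℕ, 2 ≤ n ∧ ∃ d : ℕ → ℕ,
      (∀ i, 1 ≤ i → 1 ≤ d i) ∧ a 1 = 1 ∧ (∀ i, 2 ≤ i → a i = d (i - 1)) ∧
      (∀ i, 2 ≤ i → d (i + (n - 1)) = d i) ∧ d 1 ≤ d n

/-- A Sturm number: an irrational γ ∈ (0,1) whose continued fraction expansion is of
type (i) or type (ii). -/
def IsSturmNumber (γ : ℝ) : Prop :=
  Irrational γ ∧ 0 < γ ∧ γ < 1 ∧ (CFTypeI γ ∨ CFTypeII γ)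


section Stmt17Helpers

open List

lemma applyM_cons (g : AB → List AB) (c : AB) (w : List AB) :
    applyM g (c :: w) = g c ++ applyM g w := by simp [applyM]

lemma applyM_pair (g : AB → List AB) (c d : AB) :
    applyM g [c, d] = g c ++ g d := by simp [applyM]

lemma std_struct {ψ : AB → List AB} (h : IsStandard ψ) :
    1 ≤ (ψ AB.a).length ∧ 1 ≤ (ψ AB.b).length ∧
    ∃ z x y, x ≠ y ∧ ψ AB.a ++ ψ AB.b = z ++ [x, y] ∧ ψ AB.b ++ ψ AB.a = z ++ [y, x] ∧
      z <+: ψ AB.a ++ z ∧ z <+: ψ AB.b ++ z := by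
  induction h with
  | id => exact ⟨by simp, by simp, [], AB.a, AB.b, by simp, rfl, rfl, by simp, by simp⟩
  | @compE ψ h ih =>
    obtain ⟨ha, hb, z, x, y, hxy, h1, h2, hpa, hpb⟩ := ih
    have ea : compM ψ Em AB.a = ψ AB.b := by simp [compM, Em, applyM]
    have eb : compM ψ Em AB.b = ψ AB.a := by simp [compM, Em, applyM]
    rw [ea, eb]
    exact ⟨hb, ha, z, y, x, hxy.symm, h2, h1, hpb, hpa⟩
  | @compPhi ψ h ih =>
    obtain ⟨ha, hb, z, x, y, hxy, h1, h2, hpa, hpb⟩ := ih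
    have ea : compM ψ phim AB.a = ψ AB.a ++ ψ AB.b := by simp [compM, phim, applyM]
    have eb : compM ψ phim AB.b = ψ AB.a := by simp [compM, phim, applyM]
    rw [ea, eb]
    refine ⟨by simp; omega, ha, ψ AB.a ++ z, y, x, hxy.symm, ?_, ?_, ?_, ?_⟩
    · rw [append_assoc, append_assoc, h2]
    · rw [append_assoc, h1]
    · have hz : z <+: ψ AB.b ++ (ψ AB.a ++ z) :=
        hpb.trans ((prefix_append_right_inj (ψ AB.b)).mpr hpa)
      rw [append_assoc]
      exact (prefix_append_right_inj (ψ AB.a)).mpr hz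
    · exact (prefix_append_right_inj (ψ AB.a)).mpr hpa

lemma conj_of_letters {ψ ξ : AB → List AB} {u : List AB}
    (ha : ψ AB.a ++ u = u ++ ξ AB.a) (hb : ψ AB.b ++ u = u ++ ξ AB.b) :
    ∀ w, applyM ψ w ++ u = u ++ applyM ξ w := by
  intro w
  induction w with
  | nil => simp [applyM]
  | cons c w ih =>
    have hc : ψ c ++ u = u ++ ξ c := by cases c <;> assumption
    rw [applyM_cons, applyM_cons, append_assoc, ih, ← append_assoc, hc, append_assoc]

lemma applyM_replicate_succ (g : AB → List AB) (c : AB) (m : ℕ) :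
    applyM g (List.replicate (m + 1) c) = g c ++ applyM g (List.replicate m c) := by
  rw [List.replicate_succ, applyM_cons]

lemma length_applyM_replicate (g : AB → List AB) (c : AB) (m : ℕ) :
    (applyM g (List.replicate m c)).length = m * (g c).length := by
  induction m with
  | zero => simp [applyM]
  | succ m ih => rw [applyM_replicate_succ, length_append, ih]; ring

lemma prefix_pow {ψ : AB → List AB} {z : List AB} {c : AB} (h : z <+: ψ c ++ z) (m : ℕ) :
    z <+: applyM ψ (List.replicate m c) ++ z := by
  induction m with
  | zero => simp [applyM]
  | succ m ih =>
    rw [applyM_replicate_succ, append_assoc]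
    exact h.trans ((prefix_append_right_inj (ψ c)).mpr ih)

lemma prefix_left_of_prefix_append {l1 l2 l3 : List AB} (h : l1 <+: l2 ++ l3)
    (hl : l1.length ≤ l2.length) : l1 <+: l2 := by
  have h2 := List.prefix_iff_eq_take.mp h
  rw [List.take_append_of_le_length hl] at h2
  rw [h2]
  exact List.take_prefix _ _

lemma u_prefix_pow {ψ ξ : AB → List AB} {u : List AB}
    (hrel : ∀ w, applyM ψ w ++ u = u ++ applyM ξ w) {c : AB} {m : ℕ}
    (hm : u.length ≤ m * (ψ c).length) :
    u <+: applyM ψ (List.replicate m c) := by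
  have h := hrel (List.replicate m c)
  have hp : u <+: applyM ψ (List.replicate m c) ++ u :=
    ⟨applyM ξ (List.replicate m c), h.symm⟩
  exact prefix_left_of_prefix_append hp (by rw [length_applyM_replicate]; exact hm)

lemma exists_conj_aux {ψ : AB → List AB} {z : List AB}
    (hpa : z <+: ψ AB.a ++ z) (hpb : z <+: ψ AB.b ++ z) {k : ℕ} (hk : k ≤ z.length) :
    IsRightConj ψ (fun c => (ψ c ++ z.take k).drop k) k := by
  have hulen : (z.take k).length = k := by simp [hk]
  have key : ∀ c : AB, ψ c ++ z.take k = z.take k ++ (ψ c ++ z.take k).drop k := by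
    intro c
    have hp : z <+: ψ c ++ z := by cases c <;> assumption
    have h2 : z.take k <+: ψ c ++ z := (List.take_prefix k z).trans hp
    have h3 : z.take k <+: (ψ c ++ z).take ((ψ c).length + k) :=
      List.prefix_take_iff.mpr ⟨h2, by rw [hulen]; omega⟩
    rw [List.take_length_add_append] at h3
    have hu : (ψ c ++ z.take k).take k = z.take k := by
      have h4 := List.prefix_iff_eq_take.mp h3
      rw [hulen] at h4
      exact h4.symm
    conv_lhs => rw [← List.take_append_drop k (ψ c ++ z.take k)]
    rw [hu]
  exact ⟨z.take k, hulen, conj_of_letters (key AB.a) (key AB.b)⟩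

lemma pow_shift {ψ : AB → List AB} {c : AB} {z ra : List AB}
    (hra : z ++ ra = ψ c ++ z) (m : ℕ) :
    applyM ψ (List.replicate m c) ++ z = z ++ lpow ra m := by
  induction m with
  | zero => simp [applyM, lpow]
  | succ m ih =>
    show applyM ψ (List.replicate (m + 1) c) ++ z = z ++ (ra ++ lpow ra m)
    rw [applyM_replicate_succ, append_assoc, ih, ← append_assoc, ← hra, append_assoc]

lemma length_lpow (w : List AB) (j : ℕ) : (lpow w j).length = j * w.length := by
  induction j with
  | zero => simp [lpow]
  | succ j ih => show (w ++ lpow w j).length = _; rw [length_append, ih]; ring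

lemma comm_lpow {X t : List AB} (h : X ++ t = t ++ X) (j : ℕ) :
    X ++ lpow t j = lpow t j ++ X := by
  induction j with
  | zero => simp [lpow]
  | succ j ih =>
    show X ++ (t ++ lpow t j) = (t ++ lpow t j) ++ X
    rw [← append_assoc, h, append_assoc, ih, ← append_assoc]

lemma head_ra {ψ : AB → List AB} {c d : AB} {z ra rb : List AB} {x y : AB}
    (ha : 1 ≤ (ψ c).length)
    (hra : z ++ ra = ψ c ++ z) (hrb : z ++ rb = ψ d ++ z)
    (h1 : ψ c ++ ψ d = z ++ [x, y]) :
    ∃ ra', ra = x :: ra' := by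
  have key : z ++ (ra ++ rb) = z ++ ([x, y] ++ z) := by
    calc z ++ (ra ++ rb) = (z ++ ra) ++ rb := by rw [append_assoc]
    _ = (ψ c ++ z) ++ rb := by rw [hra]
    _ = ψ c ++ (z ++ rb) := by rw [append_assoc]
    _ = ψ c ++ (ψ d ++ z) := by rw [hrb]
    _ = (ψ c ++ ψ d) ++ z := by rw [append_assoc]
    _ = (z ++ [x, y]) ++ z := by rw [h1]
    _ = z ++ ([x, y] ++ z) := by rw [append_assoc]
  have hab : ra ++ rb = x :: y :: z := List.append_cancel_left key
  have hlra : ra.length = (ψ c).length := by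
    have := congrArg List.length hra
    simp at this
    omega
  cases ra with
  | nil => simp at hlra; omega
  | cons h t =>
    refine ⟨t, ?_⟩
    simp at hab
    rw [hab.1]

lemma zx_prefix_pow {ψ : AB → List AB} {c : AB} {z ra : List AB} {x : AB} {ra' : List AB}
    (hra : z ++ ra = ψ c ++ z) (hx : ra = x :: ra') {m : ℕ} (hm : z.length + 1 ≤ m * (ψ c).length)
    (hm1 : 1 ≤ m) :
    z ++ [x] <+: applyM ψ (List.replicate m c) := by
  have hps := pow_shift hra m
  have hxp : z ++ [x] <+: z ++ lpow ra m := by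
    apply (prefix_append_right_inj z).mpr
    obtain ⟨m', rfl⟩ := Nat.exists_eq_add_of_le hm1
    show [x] <+: lpow ra (1 + m')
    rw [Nat.add_comm]
    show [x] <+: ra ++ lpow ra m'
    rw [hx]
    exact ⟨ra' ++ lpow (x :: ra') m', rfl⟩
  rw [← hps] at hxp
  exact prefix_left_of_prefix_append hxp
    (by rw [length_applyM_replicate]; simp; omega)

lemma no_conj_large {ψ ξ : AB → List AB} {z : List AB} {x y : AB}
    (ha : 1 ≤ (ψ AB.a).length) (hb : 1 ≤ (ψ AB.b).length) (hxy : x ≠ y)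
    (h1 : ψ AB.a ++ ψ AB.b = z ++ [x, y]) (h2 : ψ AB.b ++ ψ AB.a = z ++ [y, x])
    (hpa : z <+: ψ AB.a ++ z) (hpb : z <+: ψ AB.b ++ z)
    {k : ℕ} (hk : z.length < k) : ¬ IsRightConj ψ ξ k := by
  rintro ⟨u, hulen, hrel⟩
  obtain ⟨ra, hra⟩ := hpa
  obtain ⟨rb, hrb⟩ := hpb
  obtain ⟨ra', hxa⟩ := head_ra ha hra hrb h1
  obtain ⟨rb', hyb⟩ := head_ra hb hrb hra h2
  have hka : z.length + 1 ≤ k * (ψ AB.a).length := by nlinarith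
  have hkb : z.length + 1 ≤ k * (ψ AB.b).length := by nlinarith
  have hk1 : 1 ≤ k := by omega
  have hZXa : z ++ [x] <+: applyM ψ (List.replicate k AB.a) := zx_prefix_pow hra hxa hka hk1
  have hZYb : z ++ [y] <+: applyM ψ (List.replicate k AB.b) := zx_prefix_pow hrb hyb hkb hk1
  have hua : u <+: applyM ψ (List.replicate k AB.a) :=
    u_prefix_pow hrel (by rw [hulen]; nlinarith)
  have hub : u <+: applyM ψ (List.replicate k AB.b) :=
    u_prefix_pow hrel (by rw [hulen]; nlinarith)
  have hx_u : z ++ [x] <+: u :=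
    List.prefix_of_prefix_length_le hZXa hua (by simp; omega)
  have hy_u : z ++ [y] <+: u :=
    List.prefix_of_prefix_length_le hZYb hub (by simp; omega)
  have heq : z ++ [x] = z ++ [y] :=
    (List.prefix_of_prefix_length_le hx_u hy_u (by simp)).eq_of_length (by simp)
  have := List.append_cancel_left heq
  simp at this
  exact hxy this

lemma conj_distinct {ψ ξ : AB → List AB} {z : List AB} {x y : AB}
    (ha : 1 ≤ (ψ AB.a).length) (hxy : x ≠ y)
    (h1 : ψ AB.a ++ ψ AB.b = z ++ [x, y]) (h2 : ψ AB.b ++ ψ AB.a = z ++ [y, x])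
    (hpa : z <+: ψ AB.a ++ z)
    {k k' : ℕ} (hk : k ≤ z.length) (hk' : k' ≤ z.length) (hlt : k < k')
    (hc : IsRightConj ψ ξ k) (hc' : IsRightConj ψ ξ k') : False := by
  obtain ⟨u, hul, hrel⟩ := hc
  obtain ⟨u', hul', hrel'⟩ := hc'
  have hWlen : z.length ≤ z.length * (ψ AB.a).length := Nat.le_mul_of_pos_right _ ha
  have hu : u <+: applyM ψ (List.replicate z.length AB.a) :=
    u_prefix_pow hrel (by omega)
  have hu' : u' <+: applyM ψ (List.replicate z.length AB.a) :=
    u_prefix_pow hrel' (by omega)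
  have hz : z <+: applyM ψ (List.replicate z.length AB.a) :=
    prefix_left_of_prefix_append (prefix_pow hpa z.length)
      (by rw [length_applyM_replicate]; omega)
  obtain ⟨t, htu⟩ := List.prefix_of_prefix_length_le hu hu' (by omega)
  have htlen : t.length = k' - k := by
    have := congrArg List.length htu
    simp at this
    omega
  have hcomm : ∀ w, applyM ξ w ++ t = t ++ applyM ξ w := by
    intro w
    apply List.append_cancel_left (as := u)
    calc u ++ (applyM ξ w ++ t) = (u ++ applyM ξ w) ++ t := by rw [append_assoc]
    _ = (applyM ψ w ++ u) ++ t := by rw [hrel w]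
    _ = applyM ψ w ++ (u ++ t) := by rw [append_assoc]
    _ = applyM ψ w ++ u' := by rw [htu]
    _ = u' ++ applyM ξ w := hrel' w
    _ = (u ++ t) ++ applyM ξ w := by rw [htu]
    _ = u ++ (t ++ applyM ξ w) := by rw [append_assoc]
  have hu_take : u = z.take k := by
    have := List.prefix_iff_eq_take.mp (List.prefix_of_prefix_length_le hu hz (by omega))
    rwa [hul] at this
  have hzsplit : z = u ++ z.drop k := by
    rw [hu_take, List.take_append_drop]
  have hX : applyM ξ [AB.a, AB.b] = z.drop k ++ ([x, y] ++ u) := by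
    apply List.append_cancel_left (as := u)
    calc u ++ applyM ξ [AB.a, AB.b] = applyM ψ [AB.a, AB.b] ++ u := (hrel _).symm
    _ = (ψ AB.a ++ ψ AB.b) ++ u := by rw [applyM_pair]
    _ = (z ++ [x, y]) ++ u := by rw [h1]
    _ = z ++ ([x, y] ++ u) := by rw [append_assoc]
    _ = (u ++ z.drop k) ++ ([x, y] ++ u) := by rw [← hzsplit]
    _ = u ++ (z.drop k ++ ([x, y] ++ u)) := by rw [append_assoc]
  have hY : applyM ξ [AB.b, AB.a] = z.drop k ++ ([y, x] ++ u) := by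
    apply List.append_cancel_left (as := u)
    calc u ++ applyM ξ [AB.b, AB.a] = applyM ψ [AB.b, AB.a] ++ u := (hrel _).symm
    _ = (ψ AB.b ++ ψ AB.a) ++ u := by rw [applyM_pair]
    _ = (z ++ [y, x]) ++ u := by rw [h2]
    _ = z ++ ([y, x] ++ u) := by rw [append_assoc]
    _ = (u ++ z.drop k) ++ ([y, x] ++ u) := by rw [← hzsplit]
    _ = u ++ (z.drop k ++ ([y, x] ++ u)) := by rw [append_assoc]
  have hlenXY : (applyM ξ [AB.b, AB.a]).length = (applyM ξ [AB.a, AB.b]).length := by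
    rw [hX, hY]; simp
  have ht1 : 1 ≤ t.length := by omega
  have hXj : applyM ξ [AB.a, AB.b] <+: lpow t (applyM ξ [AB.a, AB.b]).length := by
    have hc1 := comm_lpow (hcomm [AB.a, AB.b]) (applyM ξ [AB.a, AB.b]).length
    have hp : applyM ξ [AB.a, AB.b] <+:
        lpow t (applyM ξ [AB.a, AB.b]).length ++ applyM ξ [AB.a, AB.b] :=
      ⟨lpow t (applyM ξ [AB.a, AB.b]).length, hc1⟩
    exact prefix_left_of_prefix_append hp (by rw [length_lpow]; nlinarith)
  have hYj : applyM ξ [AB.b, AB.a] <+: lpow t (applyM ξ [AB.a, AB.b]).length := by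
    have hc1 := comm_lpow (hcomm [AB.b, AB.a]) (applyM ξ [AB.a, AB.b]).length
    have hp : applyM ξ [AB.b, AB.a] <+:
        lpow t (applyM ξ [AB.a, AB.b]).length ++ applyM ξ [AB.b, AB.a] :=
      ⟨lpow t (applyM ξ [AB.a, AB.b]).length, hc1⟩
    exact prefix_left_of_prefix_append hp (by rw [length_lpow]; nlinarith)
  have hsx : z.drop k ++ [x] <+: lpow t (applyM ξ [AB.a, AB.b]).length := by
    refine (?_ : z.drop k ++ [x] <+: applyM ξ [AB.a, AB.b]).trans hXj
    rw [hX]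
    apply (prefix_append_right_inj (z.drop k)).mpr
    exact ⟨y :: u, rfl⟩
  have hsy : z.drop k ++ [y] <+: lpow t (applyM ξ [AB.a, AB.b]).length := by
    refine (?_ : z.drop k ++ [y] <+: applyM ξ [AB.b, AB.a]).trans hYj
    rw [hY]
    apply (prefix_append_right_inj (z.drop k)).mpr
    exact ⟨x :: u, rfl⟩
  have heq : z.drop k ++ [x] = z.drop k ++ [y] :=
    (List.prefix_of_prefix_length_le hsx hsy (by simp)).eq_of_length (by simp)
  have := List.append_cancel_left heq
  simp at this
  exact hxy this

lemma conj_unique {ψ ξ ξ' : AB → List AB} {k : ℕ} (ha : 1 ≤ (ψ AB.a).length)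
    (hc : IsRightConj ψ ξ k) (hc' : IsRightConj ψ ξ' k) : ξ = ξ' := by
  obtain ⟨u, hul, hrel⟩ := hc
  obtain ⟨u', hul', hrel'⟩ := hc'
  have hm : k ≤ k * (ψ AB.a).length := Nat.le_mul_of_pos_right _ ha
  have hu : u <+: applyM ψ (List.replicate k AB.a) := u_prefix_pow hrel (by omega)
  have hu' : u' <+: applyM ψ (List.replicate k AB.a) := u_prefix_pow hrel' (by omega)
  have huu : u = u' :=
    (List.prefix_of_prefix_length_le hu hu' (by omega)).eq_of_length (by omega)
  funext c
  have e1 := hrel [c]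
  have e2 := hrel' [c]
  rw [← huu] at e2
  have h3 : applyM ξ [c] = applyM ξ' [c] := List.append_cancel_left (e1.symm.trans e2)
  simpa [applyM] using h3

end Stmt17Helpers

/-- A standard morphism ψ has exactly |ψ(ab)| − 1 distinct right
conjugates, namely ψ₀, …, ψ_{|ψ(ab)|−2}: a k-th right conjugate exists for each
0 ≤ k ≤ |ψ(ab)| − 2, right conjugates at distinct such indices are distinct, every
right conjugate of ψ occurs at some index 0 ≤ k ≤ |ψ(ab)| − 2, and the set of all
right conjugates of ψ has exactly |ψ(ab)| − 1 elements. -/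
theorem statement17 (ψ : AB → List AB) (hψ : IsStandard ψ) :
    (∀ k, k ≤ (applyM ψ [AB.a, AB.b]).length - 2 → ∃ ξ, IsRightConj ψ ξ k) ∧
    (∀ k k' : ℕ, ∀ ξ ξ' : AB → List AB,
      k ≤ (applyM ψ [AB.a, AB.b]).length - 2 →
      k' ≤ (applyM ψ [AB.a, AB.b]).length - 2 →
      IsRightConj ψ ξ k → IsRightConj ψ ξ' k' → ξ = ξ' → k = k') ∧
    (∀ ξ : AB → List AB, ∀ k : ℕ, IsRightConj ψ ξ k →
      ∃ k', k' ≤ (applyM ψ [AB.a, AB.b]).length - 2 ∧ IsRightConj ψ ξ k') ∧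
    {ξ : AB → List AB | ∃ k, IsRightConj ψ ξ k}.ncard =
      (applyM ψ [AB.a, AB.b]).length - 1 := by
  obtain ⟨ha, hb, z, x, y, hxy, h1, h2, hpa, hpb⟩ := std_struct hψ
  have habl : applyM ψ [AB.a, AB.b] = z ++ [x, y] := by rw [applyM_pair, h1]
  have hlen2 : (applyM ψ [AB.a, AB.b]).length - 2 = z.length := by simp [habl]
  have hlen1 : (applyM ψ [AB.a, AB.b]).length - 1 = z.length + 1 := by simp [habl]
  refine ⟨?_, ?_, ?_, ?_⟩
  · intro k hk
    rw [hlen2] at hk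
    exact ⟨_, exists_conj_aux hpa hpb hk⟩
  · intro k k' ξ ξ' hk hk' hc hc' heq
    rw [hlen2] at hk hk'
    subst heq
    rcases lt_trichotomy k k' with h | h | h
    · exact absurd (conj_distinct ha hxy h1 h2 hpa hk hk' h hc hc') (fun f => f.elim)
    · exact h
    · exact absurd (conj_distinct ha hxy h1 h2 hpa hk' hk h hc' hc) (fun f => f.elim)
  · intro ξ k hc
    rcases le_or_gt k z.length with h | h
    · exact ⟨k, by rw [hlen2]; exact h, hc⟩
    · exact absurd hc (no_conj_large ha hb hxy h1 h2 hpa hpb h)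
  · have hfk : ∀ k, k ≤ z.length → IsRightConj ψ (fun c => (ψ c ++ z.take k).drop k) k :=
      fun k hk => exists_conj_aux hpa hpb hk
    have hS : {ξ : AB → List AB | ∃ k, IsRightConj ψ ξ k} =
        (fun k : ℕ => fun c => (ψ c ++ z.take k).drop k) '' Set.Iic z.length := by
      ext ξ
      constructor
      · rintro ⟨k, hc⟩
        rcases le_or_gt k z.length with h | h
        · exact ⟨k, Set.mem_Iic.mpr h, conj_unique ha (hfk k h) hc⟩
        · exact absurd hc (no_conj_large ha hb hxy h1 h2 hpa hpb h)
      · rintro ⟨k, hk, rfl⟩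
        exact ⟨k, hfk k (Set.mem_Iic.mp hk)⟩
    rw [hS, Set.ncard_image_of_injOn, ← Finset.coe_Iic, Set.ncard_coe_finset,
      Nat.card_Iic, hlen1]
    intro k hk k' hk' hFe
    have hFe' : (fun c => (ψ c ++ z.take k).drop k) = (fun c => (ψ c ++ z.take k').drop k') := hFe
    have ck' : IsRightConj ψ (fun c => (ψ c ++ z.take k).drop k) k' := by
      rw [hFe']; exact hfk k' (Set.mem_Iic.mp hk')
    have ck : IsRightConj ψ (fun c => (ψ c ++ z.take k).drop k) k := hfk k (Set.mem_Iic.mp hk)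
    rcases lt_trichotomy k k' with h | h | h
    · exact absurd (conj_distinct ha hxy h1 h2 hpa (Set.mem_Iic.mp hk) (Set.mem_Iic.mp hk') h
        ck ck') (fun f => f.elim)
    · exact h
    · exact absurd (conj_distinct ha hxy h1 h2 hpa (Set.mem_Iic.mp hk') (Set.mem_Iic.mp hk) h
        ck' ck) (fun f => f.elim)
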